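/- Let Q > 0 be real and define I(t, z) = ∫_0^{∞} e^{−(x + Qe^t/x)/z} dx/x for t ∈ ℝ and z > 0. Then I satisfies the scaling identity I(t, z) = I(t − 2s, e^{−s} z) for all s ∈ ℝ; equivalently, I is differentiable in (t,z) and z·∂I/∂z + 2·∂I/∂t = 0. Consequently 𝒥(t,z) = (2πz)^{−1/2} I(t,z) satisfies (z∂_z + 2∂_t)𝒥 = −(1/2)𝒥. -/

import Mathlib

open MeasureTheory

namespace CP1OscAux
open Real Set Metric

noncomputable def G : ℝ → ℝ := fun a => ∫ u in Ioi (0:ℝ), Real.exp (-(a * (u + 1/u))) / u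

lemma helper1 {c v : ℝ} (hc : 0 < c) (hv : 0 < v) : v * Real.exp (-(c*v)) ≤ 1/c := by
  have h : c * v ≤ Real.exp (c*v) := (Real.add_one_le_exp _).trans' (by nlinarith)
  rw [Real.exp_neg]
  rw [div_eq_mul_inv, one_mul]
  have hev : (0:ℝ) < Real.exp (c*v) := Real.exp_pos _
  rw [mul_inv_le_iff₀ hev, inv_mul_eq_div, le_div_iff₀ hc]
  nlinarith

lemma helper2 {c u : ℝ} (hc : 0 < c) (hu : 0 < u) :
    Real.exp (-(c * (u + 1/u))) / u ≤ (1/c) * Real.exp (-(c*u)) := by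
  have h1 : Real.exp (-(c * (u + 1/u))) = Real.exp (-(c*u)) * Real.exp (-(c*(1/u))) := by
    rw [← Real.exp_add]; ring_nf
  rw [h1]
  have h2 : Real.exp (-(c*(1/u))) / u ≤ 1/c := by
    have := helper1 hc (by positivity : (0:ℝ) < 1/u)
    calc Real.exp (-(c*(1/u))) / u = (1/u) * Real.exp (-(c*(1/u))) := by
          rw [div_eq_mul_inv, one_div, mul_comm]
      _ ≤ 1/c := this
  calc Real.exp (-(c*u)) * Real.exp (-(c*(1/u))) / u
      = Real.exp (-(c*u)) * (Real.exp (-(c*(1/u))) / u) := by ring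
    _ ≤ Real.exp (-(c*u)) * (1/c) := by
        exact mul_le_mul_of_nonneg_left h2 (Real.exp_pos _).le
    _ = (1/c) * Real.exp (-(c*u)) := by ring

lemma helper3 {c u : ℝ} (hc : 0 < c) (hu : 0 < u) :
    (u + 1/u) * Real.exp (-(c * (u + 1/u))) / u ≤ (2/c) * ((1/(c/2)) * Real.exp (-((c/2)*u))) := by
  have hs : 0 < u + 1/u := by positivity
  have h1 : Real.exp (-(c * (u+1/u))) = Real.exp (-((c/2)*(u+1/u))) * Real.exp (-((c/2)*(u+1/u))) := by
    rw [← Real.exp_add]; ring_nf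
  have h2 : (u+1/u) * Real.exp (-((c/2)*(u+1/u))) ≤ 2/c := by
    have := helper1 (c := c/2) (v := u + 1/u) (by positivity) hs
    calc (u+1/u) * Real.exp (-((c/2)*(u+1/u))) ≤ 1/(c/2) := this
      _ = 2/c := by field_simp
  have h3 : Real.exp (-((c/2) * (u + 1/u))) / u ≤ (1/(c/2)) * Real.exp (-((c/2)*u)) :=
    helper2 (by positivity) hu
  calc (u + 1/u) * Real.exp (-(c * (u + 1/u))) / u
      = ((u+1/u) * Real.exp (-((c/2)*(u+1/u)))) * (Real.exp (-((c/2)*(u+1/u))) / u) := by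
        rw [h1]; ring
    _ ≤ (2/c) * ((1/(c/2)) * Real.exp (-((c/2)*u))) := by
        apply mul_le_mul h2 h3 (by positivity) (by positivity)

lemma G_integrand_contOn (a : ℝ) :
    ContinuousOn (fun u : ℝ => Real.exp (-(a * (u + 1/u))) / u) (Ioi 0) := by
  apply ContinuousOn.div
  · apply Continuous.comp_continuousOn Real.continuous_exp
    apply ContinuousOn.neg
    apply ContinuousOn.mul continuousOn_const
    exact continuousOn_id.add (continuousOn_const.div continuousOn_id (fun u hu => ne_of_gt hu))
  · exact continuousOn_id
  · exact fun u hu => ne_of_gt hu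

lemma G_integrable {a : ℝ} (ha : 0 < a) :
    IntegrableOn (fun u : ℝ => Real.exp (-(a * (u + 1/u))) / u) (Ioi 0) := by
  apply Integrable.mono' ((exp_neg_integrableOn_Ioi 0 ha).const_mul (1/a))
  · exact (G_integrand_contOn a).aestronglyMeasurable measurableSet_Ioi
  · filter_upwards [ae_restrict_mem measurableSet_Ioi] with u hu
    rw [Real.norm_eq_abs, abs_of_nonneg (div_nonneg (Real.exp_pos _).le (le_of_lt hu))]
    simpa using helper2 ha hu

lemma bound_integrable {a : ℝ} (ha : 0 < a) :
    Integrable (fun u : ℝ => (2/(a/2)) * ((1/((a/2)/2)) * Real.exp (-(((a/2)/2)*u))))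
      (volume.restrict (Ioi (0:ℝ))) := by
  have h0 : (0:ℝ) < (a/2)/2 := by positivity
  have h1 : IntegrableOn (fun u : ℝ => Real.exp (-(((a/2)/2)*u))) (Ioi 0) := by
    have := exp_neg_integrableOn_Ioi 0 h0
    simpa [neg_mul] using this
  exact (h1.const_mul _).const_mul _

set_option maxHeartbeats 1000000 in
lemma G_hasDerivAt {a : ℝ} (ha : 0 < a) :
    HasDerivAt G (∫ u in Ioi (0:ℝ), -(u + 1/u) * Real.exp (-(a * (u + 1/u))) / u) a := by
  have hmeas : ∀ x : ℝ, AEStronglyMeasurable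
      (fun u : ℝ => Real.exp (-(x * (u + 1/u))) / u) (volume.restrict (Ioi (0:ℝ))) :=
    fun x => (G_integrand_contOn x).aestronglyMeasurable measurableSet_Ioi
  have hmeas' : AEStronglyMeasurable
      (fun u : ℝ => -(u + 1/u) * Real.exp (-(a * (u + 1/u))) / u) (volume.restrict (Ioi (0:ℝ))) := by
    apply ContinuousOn.aestronglyMeasurable _ measurableSet_Ioi
    apply ContinuousOn.div _ continuousOn_id (fun u hu => ne_of_gt hu)
    apply ContinuousOn.mul
    · exact (continuousOn_id.add (continuousOn_const.div continuousOn_id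
        (fun u hu => ne_of_gt hu))).neg
    · exact Real.continuous_exp.comp_continuousOn
        ((continuousOn_const.mul (continuousOn_id.add (continuousOn_const.div continuousOn_id
          (fun u hu => ne_of_gt hu)))).neg)
  have hbnd : ∀ᵐ u ∂(volume.restrict (Ioi (0:ℝ))), ∀ x ∈ ball a (a/2),
      ‖-(u + 1/u) * Real.exp (-(x * (u + 1/u))) / u‖
        ≤ (2/(a/2)) * ((1/((a/2)/2)) * Real.exp (-(((a/2)/2)*u))) := by
    rw [ae_restrict_iff' measurableSet_Ioi]
    filter_upwards with u
    intro hu x hx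
    have hx2 : a/2 < x := by
      have := abs_lt.mp (mem_ball_iff_norm.mp hx); linarith [this.1]
    have hupos : (0:ℝ) < u := hu
    have hs : (0:ℝ) < u + 1/u := by positivity
    have hEq : ‖-(u + 1/u) * Real.exp (-(x * (u + 1/u))) / u‖
        = (u + 1/u) * Real.exp (-(x * (u + 1/u))) / u := by
      rw [Real.norm_eq_abs, abs_of_nonpos (by
        apply div_nonpos_of_nonpos_of_nonneg _ (le_of_lt hupos)
        exact mul_nonpos_of_nonpos_of_nonneg (by linarith) (Real.exp_pos _).le)]
      ring
    rw [hEq]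
    calc (u + 1/u) * Real.exp (-(x * (u + 1/u))) / u
        ≤ (u + 1/u) * Real.exp (-((a/2) * (u + 1/u))) / u := by
          apply div_le_div_of_nonneg_right ?_ hupos.le
          apply mul_le_mul_of_nonneg_left _ (le_of_lt hs)
          apply Real.exp_le_exp.mpr
          nlinarith
      _ ≤ (2/(a/2)) * ((1/((a/2)/2)) * Real.exp (-(((a/2)/2)*u))) := helper3 (by positivity) hupos
  have hdiff : ∀ᵐ u ∂(volume.restrict (Ioi (0:ℝ))), ∀ x ∈ ball a (a/2),
      HasDerivAt (fun x : ℝ => Real.exp (-(x * (u + 1/u))) / u)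
        (-(u + 1/u) * Real.exp (-(x * (u + 1/u))) / u) x := by
    rw [ae_restrict_iff' measurableSet_Ioi]
    filter_upwards with u
    intro hu x hx
    have h1 : HasDerivAt (fun x : ℝ => -(x * (u + 1/u))) (-(u+1/u)) x := by
      simpa using ((hasDerivAt_id x).mul_const (u+1/u)).fun_neg
    have hd := h1.exp
    have := hd.div_const u
    refine this.congr_deriv ?_
    ring
  have key := hasDerivAt_integral_of_dominated_loc_of_deriv_le
    (μ := volume.restrict (Ioi (0:ℝ)))
    (F := fun x u => Real.exp (-(x * (u + 1/u))) / u)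
    (F' := fun x u => -(u + 1/u) * Real.exp (-(x * (u + 1/u))) / u)
    (x₀ := a)
    (bound := fun u : ℝ => (2/(a/2)) * ((1/((a/2)/2)) * Real.exp (-(((a/2)/2)*u))))
    (ball_mem_nhds a (by positivity : (0:ℝ) < a/2))
    (Filter.Eventually.of_forall hmeas) (G_integrable ha) hmeas' hbnd (bound_integrable ha) hdiff
  exact key.2

lemma G_differentiableAt {a : ℝ} (ha : 0 < a) : ∃ g', HasDerivAt G g' a :=
  ⟨_, G_hasDerivAt ha⟩

lemma I_eq {Q t z : ℝ} (hQ : 0 < Q) (hz : 0 < z) :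
    (∫ x in Ioi (0:ℝ), Real.exp (-(x + Q * Real.exp t / x) / z) / x)
      = G (Real.sqrt (Q * Real.exp t) / z) := by
  set c := Real.sqrt (Q * Real.exp t) with hcdef
  have hQe : (0:ℝ) < Q * Real.exp t := by positivity
  have hc : 0 < c := Real.sqrt_pos.mpr hQe
  have hc2 : c * c = Q * Real.exp t := Real.mul_self_sqrt hQe.le
  have key := integral_comp_mul_left_Ioi
    (fun x => Real.exp (-(x + Q * Real.exp t / x) / z) / x) 0 hc
  rw [mul_zero] at key
  have hpt : EqOn (fun u : ℝ => Real.exp (-(c*u + Q * Real.exp t / (c*u)) / z) / (c*u))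
      (fun u : ℝ => c⁻¹ * (Real.exp (-((c/z) * (u + 1/u))) / u)) (Ioi 0) := by
    intro u hu
    have hu0 : (0:ℝ) < u := hu
    have hexp : -(c*u + Q * Real.exp t / (c*u)) / z = -((c/z) * (u + 1/u)) := by
      rw [← hc2]; field_simp
    simp only [hexp]
    rw [mul_comm c u, mul_comm c⁻¹ _, div_mul_eq_div_div, div_eq_mul_inv]
  have h2 : (∫ u in Ioi (0:ℝ), Real.exp (-(c*u + Q * Real.exp t / (c*u)) / z) / (c*u))
      = c⁻¹ * G (c/z) := by
    rw [setIntegral_congr_fun measurableSet_Ioi hpt, integral_const_mul]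
    rfl
  rw [h2] at key
  have := congrArg (fun r => c • r) key.symm
  simpa [smul_eq_mul, mul_assoc, mul_inv_cancel₀ hc.ne', ← mul_assoc] using this

end CP1OscAux

/-- Homogeneity of the oscillating integral `I(t,z) = ∫_0^∞ e^{-(x + Qe^t/x)/z} dx/x`:
it satisfies the scaling identity `I(t,z) = I(t-2s, e^{-s}z)`, equivalently it is
differentiable in each variable and `z ∂_z I + 2 ∂_t I = 0`; consequently the
normalized oscillating integral `𝒥 = (2πz)^{-1/2} I` satisfies
`(z∂_z + 2∂_t)𝒥 = -(1/2)𝒥`. -/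
theorem cp1_oscillating_integral_homogeneity (Q : ℝ) (hQ : 0 < Q) :
    let I : ℝ → ℝ → ℝ := fun t z =>
      ∫ x in Set.Ioi (0 : ℝ), Real.exp (-(x + Q * Real.exp t / x) / z) / x
    let J : ℝ → ℝ → ℝ := fun t z => I t z / Real.sqrt (2 * Real.pi * z)
    (∀ t s : ℝ, ∀ z > (0 : ℝ), I t z = I (t - 2 * s) (Real.exp (-s) * z)) ∧
    (∀ t : ℝ, ∀ z > (0 : ℝ),
      DifferentiableAt ℝ (fun t' => I t' z) t ∧ DifferentiableAt ℝ (fun z' => I t z') z ∧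
      z * deriv (fun z' => I t z') z + 2 * deriv (fun t' => I t' z) t = 0) ∧
    (∀ t : ℝ, ∀ z > (0 : ℝ),
      z * deriv (fun z' => J t z') z + 2 * deriv (fun t' => J t' z) t
        = -(1 / 2) * J t z) := by
  intro I J
  open CP1OscAux in
  have hI : ∀ t z : ℝ, 0 < z → I t z = CP1OscAux.G (Real.sqrt (Q * Real.exp t) / z) :=
    fun t z hz => CP1OscAux.I_eq hQ hz
  -- the key derivative facts
  have key : ∀ t z : ℝ, 0 < z → ∃ dT dZ : ℝ,
      HasDerivAt (fun t' => I t' z) dT t ∧ HasDerivAt (fun z' => I t z') dZ z ∧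
      z * dZ + 2 * dT = 0 := by
    intro t z hz
    set c := Real.sqrt (Q * Real.exp t) with hcdef
    have hQe : (0:ℝ) < Q * Real.exp t := by positivity
    have hc : 0 < c := Real.sqrt_pos.mpr hQe
    have hc2 : c * c = Q * Real.exp t := Real.mul_self_sqrt hQe.le
    obtain ⟨g', hG⟩ := CP1OscAux.G_differentiableAt (a := c/z) (by positivity)
    have hφ : HasDerivAt (fun t' => Real.sqrt (Q * Real.exp t') / z) (c/(2*z)) t := by
      have h1 : HasDerivAt (fun t' : ℝ => Q * Real.exp t') (Q * Real.exp t) t :=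
        (Real.hasDerivAt_exp t).const_mul Q
      have h2 := (Real.hasDerivAt_sqrt hQe.ne').comp t h1
      have h3 := h2.div_const z
      refine h3.congr_deriv ?_
      rw [← hcdef, ← hc2]
      field_simp
    have hT : HasDerivAt (fun t' => I t' z) (g' * (c/(2*z))) t := by
      have heq : (fun t' => I t' z) = fun t' => CP1OscAux.G (Real.sqrt (Q * Real.exp t') / z) :=
        funext fun t' => hI t' z hz
      rw [heq]
      exact hG.comp t hφ
    have hψ : HasDerivAt (fun z' : ℝ => c / z') (-(c/z^2)) z := by
      have h1 := (hasDerivAt_inv hz.ne').const_mul c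
      have heq : (fun z' : ℝ => c / z') = fun z' : ℝ => c * z'⁻¹ := by
        funext z'; rw [div_eq_mul_inv]
      rw [heq]
      refine h1.congr_deriv ?_
      field_simp
    have hZ : HasDerivAt (fun z' => I t z') (g' * (-(c/z^2))) z := by
      have hZ0 : HasDerivAt (fun z' : ℝ => CP1OscAux.G (c / z')) (g' * (-(c/z^2))) z :=
        hG.comp z hψ
      apply hZ0.congr_of_eventuallyEq
      filter_upwards [isOpen_Ioi.mem_nhds hz] with z' hz'
      exact hI t z' hz'
    refine ⟨_, _, hT, hZ, ?_⟩
    field_simp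
    ring
  refine ⟨?_, ?_, ?_⟩
  · -- scaling identity
    intro t s z hz
    have hz' : (0:ℝ) < Real.exp (-s) * z := by positivity
    rw [hI t z hz, hI _ _ hz']
    congr 1
    have h1 : Q * Real.exp (t - 2*s) = (Q * Real.exp t) * (Real.exp (-s))^2 := by
      rw [show t - 2*s = t + -s + -s by ring, Real.exp_add, Real.exp_add]
      ring
    have h2 : Real.sqrt (Q * Real.exp (t - 2*s)) = Real.sqrt (Q * Real.exp t) * Real.exp (-s) := by
      rw [h1, Real.sqrt_mul (by positivity : (0:ℝ) ≤ Q * Real.exp t),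
        Real.sqrt_sq (Real.exp_pos _).le]
    rw [h2, mul_comm (Real.sqrt (Q * Real.exp t)) (Real.exp (-s)),
      mul_div_mul_left _ _ (Real.exp_ne_zero (-s))]
  · -- differentiability and the PDE for I
    intro t z hz
    obtain ⟨dT, dZ, hT, hZ, hrel⟩ := key t z hz
    exact ⟨hT.differentiableAt, hZ.differentiableAt, by rw [hT.deriv, hZ.deriv]; exact hrel⟩
  · -- the PDE for J
    intro t z hz
    obtain ⟨dT, dZ, hT, hZ, hrel⟩ := key t z hz
    have hs0 : (0:ℝ) < Real.sqrt (2 * Real.pi * z) :=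
      Real.sqrt_pos.mpr (by positivity)
    set s := Real.sqrt (2 * Real.pi * z) with hsdef
    have hs2 : s * s = 2 * Real.pi * z := Real.mul_self_sqrt (by positivity)
    have hsd : HasDerivAt (fun z' : ℝ => Real.sqrt (2 * Real.pi * z')) (Real.pi / s) z := by
      have h1 : HasDerivAt (fun z' : ℝ => 2 * Real.pi * z') (2 * Real.pi) z := by
        simpa using (hasDerivAt_id z).const_mul (2 * Real.pi)
      have h2 := (Real.hasDerivAt_sqrt (by positivity : (0:ℝ) < 2*Real.pi*z).ne').comp z h1
      refine h2.congr_deriv ?_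
      rw [← hsdef]
      field_simp
    have hJz : HasDerivAt (fun z' => J t z')
        ((dZ * s - I t z * (Real.pi / s)) / s^2) z := by
      have := hZ.div hsd hs0.ne'
      exact this
    have hJt : HasDerivAt (fun t' => J t' z) (dT / s) t := hT.div_const s
    rw [hJz.deriv, hJt.deriv]
    show z * ((dZ * s - I t z * (Real.pi / s)) / s^2) + 2 * (dT / s) = -(1/2) * (I t z / s)
    have hπ : (0:ℝ) < Real.pi := Real.pi_pos
    field_simp
    linear_combination (2*s^2) * hrel + (I t z) * hs2
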